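/- Let U be a finite set, S ⊆ U^T nonempty, and p_t* the maximum entropy feedback. For any trajectory u ∈ U^T: u ∈ S if and only if ∏_{t=1}^{T} p_t*(u_t | u_{<t}) > 0, and in that case the product equals 1/|S|. -/
import Mathlib


open Finset

variable {T : ℕ}

def pref {U : Type*} [DecidableEq U] (S : Finset (Fin T → U)) (u : Fin T → U) (t : ℕ) :
    Finset (Fin T → U) :=
  S.filter (fun v => ∀ i : Fin T, (i : ℕ) < t → v i = u i)

noncomputable def mef {U : Type*} [DecidableEq U] (S : Finset (Fin T → U)) (u : Fin T → U)
    (t : ℕ) : ℝ :=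
  ((pref S u (t + 1)).card : ℝ) / ((pref S u t).card : ℝ)

lemma mem_pref {U : Type*} [DecidableEq U] {S : Finset (Fin T → U)} {u : Fin T → U}
    (hu : u ∈ S) (t : ℕ) : u ∈ pref S u t := by
  simp [pref, hu]

lemma pref_zero {U : Type*} [DecidableEq U] (S : Finset (Fin T → U)) (u : Fin T → U) :
    pref S u 0 = S := by
  simp [pref]

lemma pref_T {U : Type*} [DecidableEq U] {S : Finset (Fin T → U)} {u : Fin T → U}
    (hu : u ∈ S) : pref S u T = {u} := by
  ext v
  simp only [pref, mem_filter, mem_singleton]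
  constructor
  · rintro ⟨_, h⟩
    funext i
    exact h i i.isLt
  · rintro rfl
    exact ⟨hu, fun _ _ => rfl⟩

lemma telescope {U : Type*} [DecidableEq U] {S : Finset (Fin T → U)} {u : Fin T → U}
    (hu : u ∈ S) (n : ℕ) :
    ∏ t ∈ Finset.range n, mef S u t =
      ((pref S u n).card : ℝ) / ((pref S u 0).card : ℝ) := by
  have hne : ∀ t, ((pref S u t).card : ℝ) ≠ 0 := fun t => by
    exact_mod_cast Finset.card_ne_zero_of_mem (mem_pref hu t)
  induction n with
  | zero => simp [div_self (hne 0)]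
  | succ n ih =>
    rw [Finset.prod_range_succ, ih, mef, div_mul_div_comm,
      mul_comm (((pref S u 0).card : ℝ)) (((pref S u n).card : ℝ)),
      mul_div_mul_left _ _ (hne n)]

/-- A trajectory is feasible iff the product of its feedback values is positive, in which
case the product equals 1/|S|. -/
theorem mem_iff_mef_prod_pos (T : ℕ) (hT : 0 < T) (U : Type*) [Fintype U] [Nonempty U]
    [DecidableEq U] (S : Finset (Fin T → U)) (hS : S.Nonempty) (u : Fin T → U) :
    (u ∈ S ↔ 0 < ∏ t : Fin T, mef S u (t : ℕ)) ∧
    (u ∈ S → ∏ t : Fin T, mef S u (t : ℕ) = 1 / (S.card : ℝ)) := by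
  have hprod : ∏ t : Fin T, mef S u (t : ℕ) = ∏ t ∈ Finset.range T, mef S u t :=
    Fin.prod_univ_eq_prod_range _ _
  have heq : u ∈ S → ∏ t : Fin T, mef S u (t : ℕ) = 1 / (S.card : ℝ) := by
    intro hu
    rw [hprod, telescope hu, pref_T hu, pref_zero]
    simp
  refine ⟨⟨fun hu => ?_, fun hpos => ?_⟩, heq⟩
  · rw [heq hu]
    have : (0 : ℝ) < S.card := by exact_mod_cast Finset.card_pos.2 hS
    positivity
  · by_contra hu
    have hempty : pref S u T = ∅ := by
      rw [Finset.eq_empty_iff_forall_notMem]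
      intro v hv
      simp only [pref, mem_filter] at hv
      have hvu : v = u := funext fun i => hv.2 i i.isLt
      exact hu (hvu ▸ hv.1)
    have hzero : mef S u (T - 1) = 0 := by
      have : T - 1 + 1 = T := Nat.succ_pred_eq_of_pos hT
      simp [mef, this, hempty]
    have : ∏ t : Fin T, mef S u (t : ℕ) = 0 := by
      apply Finset.prod_eq_zero (Finset.mem_univ (⟨T - 1, Nat.pred_lt hT.ne'⟩ : Fin T))
      exact hzero
    linarith
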